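/- arXiv:2104.10458 — 3 statements merged into one kernel-verified Lean document; each statement's English description precedes it below -/
import Mathlib

section
/- For every f ∈ L¹(X, μ) and μ-a.e. x ∈ E, lim_{N→∞} (1/R_{E,N,m}(x)) ∑_{k=1}^{N+m(N,E,x)} f(T^{k−1}(x)) = ∫_X f dμ. -/
open MeasureTheory Filter Set Topology Asymptotics

open scoped ENNReal NNReal

noncomputable section

namespace Paper

variable {X : Type*}

/-- First return time to `E` under `T` (`0` if the orbit never returns to `E`). -/
def retTime (T : X → X) (E : Set X) (x : X) : ℕ :=
  sInf {k : ℕ | 0 < k ∧ T^[k] x ∈ E}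

/-- The induced map on `E`. -/
def indMap (T : X → X) (E : Set X) (x : X) : X :=
  T^[retTime T E x] x

/-- Level sets `A_n` of the first return time. -/
def levelSet (T : X → X) (E : Set X) (n : ℕ) : Set X :=
  {x ∈ E | retTime T E x = n}

/-- Super-level sets `A_{>n}` of the first return time. -/
def superLevelSet (T : X → X) (E : Set X) (n : ℕ) : Set X :=
  {x ∈ E | n < retTime T E x}

/-- The sets `A_{≥ n}`. -/
def geLevelSet (T : X → X) (E : Set X) (n : ℕ) : Set X :=
  {x ∈ E | n ≤ retTime T E x}

/-- Level sets `E_n` of the hitting time of `E`. -/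
def hitLevelSet (T : X → X) (E : Set X) (n : ℕ) : Set X :=
  {x | T^[n] x ∈ E ∧ ∀ k < n, T^[k] x ∉ E}

/-- The induced observable `f^E`. -/
def inducedObs (T : X → X) (E : Set X) (f : X → ℝ) (x : X) : ℝ :=
  ∑ k ∈ Finset.range (retTime T E x), f (T^[k] x)

/-- Birkhoff sums `S_N f(x) = ∑_{k=1}^N f(T^{k-1} x)`. -/
def birkhoff (T : X → X) (f : X → ℝ) (N : ℕ) (x : X) : ℝ :=
  ∑ k ∈ Finset.range N, f (T^[k] x)

/-- Number of visits to `E` up to time `N`: `R_{E,N}(x) = ∑_{k=1}^{N+1} 1_E(T^{k-1} x)`. -/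
def visits (T : X → X) (E : Set X) (N : ℕ) (x : X) : ℕ :=
  ∑ k ∈ Finset.range (N + 1), E.indicator (fun _ => (1 : ℕ)) (T^[k] x)

/-- The longest excursion out of `E` beginning in the first `N` steps, `m(N,E,x)`. -/
def excursionM (T : X → X) (E : Set X) (N : ℕ) (x : X) : ℕ :=
  1 + sSup {k : ℕ | 1 ≤ k ∧ ∃ ℓ, 1 ≤ ℓ ∧ ℓ ≤ N + 1 ∧ ∀ j < k, T^[ℓ + j] x ∉ E}

/-- The longest excursion out of `E` seen up to time `N`, `w(N,E,x)`. -/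
def excursionW (T : X → X) (E : Set X) (N : ℕ) (x : X) : ℕ :=
  1 + sSup {k : ℕ | 1 ≤ k ∧ ∃ ℓ, 1 ≤ ℓ ∧ ℓ ≤ N - k ∧ ∀ j < k, T^[ℓ + j] x ∉ E}

/-- `R_{E,N,m}(x) = R_{E,N+m(N,E,x)}(x)`. -/
def visitsM (T : X → X) (E : Set X) (N : ℕ) (x : X) : ℕ :=
  visits T E (N + excursionM T E N x) x

/-- Time of the `N`-th return to `E`, `τ_{E,x}(N)`. -/
def tauRet (T : X → X) (E : Set X) (x : X) (N : ℕ) : ℕ :=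
  ∑ k ∈ Finset.range N, retTime T E ((indMap T E)^[k] x)

/-- `max_{1 ≤ k ≤ N} φ_E(T_E^{k-1} x)`. -/
def maxRet (T : X → X) (E : Set X) (x : X) (N : ℕ) : ℕ :=
  (Finset.range N).sup (fun k => retTime T E ((indMap T E)^[k] x))

/-- The trimmed return time sum `τ¹_{E,x}(N)`. -/
def tauRetTrim (T : X → X) (E : Set X) (x : X) (N : ℕ) : ℕ :=
  tauRet T E x N - maxRet T E x N

/-- The second maximum of `{φ_E(T_E^{k-1} x) : k = 1, …, n}` (it may coincide
with the maximum in case of equality). -/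
def secondMaxRet (T : X → X) (E : Set X) (x : X) (n : ℕ) : ℕ :=
  sSup {v : ℕ | ∃ k₁ < n, ∃ k₂ < n, k₁ ≠ k₂ ∧
    v = min (retTime T E ((indMap T E)^[k₁] x)) (retTime T E ((indMap T E)^[k₂] x))}

/-- The sequence of random variables `(φ_E ∘ T_E^{n-1})_{n ≥ 1}` (indexed from `0`). -/
def retSeq (T : X → X) (E : Set X) (n : ℕ) (x : X) : ℝ :=
  (retTime T E ((indMap T E)^[n] x) : ℝ)

/-- The σ-algebra generated by the random variables `Y_i`, `i ∈ s`. -/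
def blockSigma {Ω : Type*} (Y : ℕ → Ω → ℝ) (s : Set ℕ) : MeasurableSpace Ω :=
  ⨆ i ∈ s, MeasurableSpace.comap (Y i) inferInstance

/-- The ψ-mixing coefficient `ψ(n)` of the sequence `(Y_n)` on `(Ω, P)`. -/
def psiCoeff {Ω : Type*} [MeasurableSpace Ω] (P : Measure Ω) (Y : ℕ → Ω → ℝ) (n : ℕ) : ℝ :=
  sSup {r : ℝ | ∃ j : ℕ, ∃ B C : Set Ω,
    MeasurableSet[blockSigma Y (Set.Iic j)] B ∧
    MeasurableSet[blockSigma Y (Set.Ici (j + n))] C ∧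
    0 < P B ∧ 0 < P C ∧
    r = |(P (B ∩ C)).toReal / ((P B).toReal * (P C).toReal) - 1|}

/-- `(Y_n)` is ψ-mixing: the coefficient `ψ(n)` tends to `0`. -/
def PsiMixing {Ω : Type*} [MeasurableSpace Ω] (P : Measure Ω) (Y : ℕ → Ω → ℝ) : Prop :=
  Tendsto (psiCoeff P Y) atTop (𝓝 0)

/-- The normalising sequence `α(n) = n / ∑_{j=0}^{n-1} μ(A_{>j})`. -/
def alphaSeq [MeasurableSpace X] (μ : Measure X) (T : X → X) (E : Set X) (n : ℕ) : ℝ :=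
  (n : ℝ) / ∑ j ∈ Finset.range n, (μ (superLevelSet T E j)).toReal

/-- `q(t) = min {j ∈ ℕ : μ(A_{>j}) ≤ 1/t}`. -/
def qFun [MeasurableSpace X] (μ : Measure X) (T : X → X) (E : Set X) (t : ℝ) : ℕ :=
  sInf {j : ℕ | 1 ≤ j ∧ (μ (superLevelSet T E j)).toReal ≤ 1 / t}

/-- `ξ(n) = q(α(n) log α(n) log²(log α(n))) / n`. -/
def xiFun [MeasurableSpace X] (μ : Measure X) (T : X → X) (E : Set X) (n : ℕ) : ℝ :=
  (qFun μ T E (alphaSeq μ T E n * Real.log (alphaSeq μ T E n) *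
      Real.log (Real.log (alphaSeq μ T E n)) ^ 2) : ℝ) / n

/-- Slow variation at infinity. -/
def SlowlyVarying (L : ℝ → ℝ) : Prop :=
  ∀ r : ℝ, 0 < r → Tendsto (fun x => L (r * x) / L x) atTop (𝓝 1)

/-- Normalised slow variation (Karamata representation with constant `c`). -/
def NormalisedSlowlyVarying (L : ℝ → ℝ) : Prop :=
  ∃ (C κ : ℝ) (η : ℝ → ℝ), 0 ≤ κ ∧ Tendsto η atTop (𝓝 (0 : ℝ)) ∧
    ∀ x, κ ≤ x → L x = C * Real.exp (∫ t in κ..x, η t / t)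

/-- `ℓ` is super-slowly varying at infinity with rate function `h`. -/
def SuperSlowlyVarying (ℓ h : ℝ → ℝ) : Prop :=
  ∀ ε : ℝ, 0 < ε → ∃ M : ℝ, ∀ x : ℝ, M ≤ x → ∀ δ ∈ Set.Icc (0 : ℝ) 1,
    |ℓ (x * h x ^ δ) / ℓ x - 1| < ε

/-- `Γ(t) = min {k ∈ ℕ : k L(k) > t}` for induced observables of the form `n L(n)`. -/
def gammaFun (L : ℝ → ℝ) (t : ℝ) : ℕ :=
  sInf {k : ℕ | 1 ≤ k ∧ t < (k : ℝ) * L k}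

/-- `ℓ(t) = ∑_{k=0}^{⌊t⌋} μ(A_{≥ Γ(k)})`. -/
def ellFun [MeasurableSpace X] (μ : Measure X) (T : X → X) (E : Set X) (L : ℝ → ℝ)
    (t : ℝ) : ℝ :=
  ∑ k ∈ Finset.range (⌊t⌋₊ + 1), (μ (geLevelSet T E (gammaFun L (k : ℝ)))).toReal

/-- `ℓ(t) = ∑_{k=0}^{⌊t⌋} μ(A_{≥ k})`. -/
def ellSimple [MeasurableSpace X] (μ : Measure X) (T : X → X) (E : Set X) (t : ℝ) : ℝ :=
  ∑ k ∈ Finset.range (⌊t⌋₊ + 1), (μ (geLevelSet T E k)).toReal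

/-- The sum of the `r` largest entries among `g 0, …, g (N-1)`. -/
def topRSum (g : ℕ → ℝ) (N r : ℕ) : ℝ :=
  sSup {v : ℝ | ∃ s : Finset ℕ, s ⊆ Finset.range N ∧ s.card = r ∧ v = ∑ k ∈ s, g k}

/-- The lightly trimmed sum `S_N^r`. -/
def trimmedSum (g : ℕ → ℝ) (N r : ℕ) : ℝ :=
  (∑ k ∈ Finset.range N, g k) - topRSum g N r

/-- The `r`-th maximum among `g 0, …, g (N-1)`. -/
def kthMax (g : ℕ → ℝ) (N r : ℕ) : ℝ :=
  sSup {v : ℝ | ∃ s : Finset ℕ, s ⊆ Finset.range N ∧ s.card = r ∧ ∀ k ∈ s, v ≤ g k}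

/-- Assumption (ii): `∑_n n μ(A_{>n})² / (∑_{j=0}^{n-1} μ(A_{>j}))² < ∞`. -/
def AssumptionII [MeasurableSpace X] (μ : Measure X) (T : X → X) (E : Set X) : Prop :=
  Summable (fun n : ℕ => (n : ℝ) * (μ (superLevelSet T E n)).toReal ^ 2 /
    (∑ j ∈ Finset.range n, (μ (superLevelSet T E j)).toReal) ^ 2)


set_option linter.unusedSectionVars false
set_option linter.unusedVariables false

section AuxHopf

variable [MeasurableSpace X] {μ : Measure X} {T : X → X} {f : X → ℝ} {E : Set X}

lemma birkhoff_succ' (T : X → X) (f : X → ℝ) (n : ℕ) (x : X) :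
    birkhoff T f (n + 1) x = f x + birkhoff T f n (T x) := by
  simp only [birkhoff, Finset.sum_range_succ', Function.iterate_succ_apply,
    Function.iterate_zero_apply, add_comm]

lemma birkhoff_succ (T : X → X) (f : X → ℝ) (n : ℕ) (x : X) :
    birkhoff T f (n + 1) x = birkhoff T f n x + f (T^[n] x) := by
  simp [birkhoff, Finset.sum_range_succ]

lemma birkhoff_sub (T : X → X) (f g : X → ℝ) (c : ℝ) (n : ℕ) (x : X) :
    birkhoff T (fun y => f y - c * g y) n x = birkhoff T f n x - c * birkhoff T g n x := by
  simp [birkhoff, Finset.sum_sub_distrib, Finset.mul_sum]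

lemma measurable_birkhoff (hT : Measurable T) (hf : Measurable f) (n : ℕ) :
    Measurable (birkhoff T f n) :=
  Finset.measurable_sum _ fun k _ => hf.comp (hT.iterate k)

/-- maximal function: `maxB T f N x = max_{1 ≤ n ≤ N+1} S_n f x`. -/
def maxB (T : X → X) (f : X → ℝ) : ℕ → X → ℝ
  | 0 => f
  | (N+1) => fun x => f x + max 0 (maxB T f N (T x))

lemma birkhoff_le_maxB : ∀ (N : ℕ) (x : X), ∀ n ≤ N, birkhoff T f (n + 1) x ≤ maxB T f N x := by
  intro N
  induction N with
  | zero => intro x n hn; interval_cases n; simp [maxB, birkhoff]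
  | succ N ih =>
    intro x n hn
    match n with
    | 0 =>
      have : birkhoff T f 1 x = f x := by simp [birkhoff]
      rw [this]
      simp only [maxB]
      linarith [le_max_left (0:ℝ) (maxB T f N (T x))]
    | (m+1) =>
      rw [birkhoff_succ']
      have := ih (T x) m (Nat.lt_succ_iff.mp (Nat.lt_of_succ_le hn))
      calc f (x) + birkhoff T f (m+1) (T x) ≤ f x + maxB T f N (T x) := by linarith
        _ ≤ maxB T f (N+1) x := by
              simp only [maxB]
              linarith [le_max_right (0:ℝ) (maxB T f N (T x))]

lemma maxB_exists : ∀ (N : ℕ) (x : X), ∃ n ≤ N, maxB T f N x = birkhoff T f (n + 1) x := by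
  intro N
  induction N with
  | zero => intro x; exact ⟨0, le_refl _, by simp [maxB, birkhoff]⟩
  | succ N ih =>
    intro x
    rcases le_or_gt (maxB T f N (T x)) 0 with h | h
    · refine ⟨0, Nat.zero_le _, ?_⟩
      simp [maxB, max_eq_left h, birkhoff]
    · obtain ⟨m, hm, he⟩ := ih (T x)
      refine ⟨m + 1, Nat.succ_le_succ hm, ?_⟩
      show f x + max 0 (maxB T f N (T x)) = _
      rw [max_eq_right h.le, he]
      exact (birkhoff_succ' T f (m + 1) x).symm

lemma maxB_mono : ∀ (N : ℕ) (x : X), maxB T f N x ≤ maxB T f (N + 1) x := by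
  intro N
  induction N with
  | zero =>
    intro x
    show f x ≤ f x + max 0 (maxB T f 0 (T x))
    linarith [le_max_left (0:ℝ) (maxB T f 0 (T x))]
  | succ N ih =>
    intro x
    simp only [maxB]
    have := ih (T x)
    gcongr
    exact this

lemma measurable_maxB (hT : Measurable T) (hf : Measurable f) (N : ℕ) :
    Measurable (maxB T f N) := by
  induction N with
  | zero => exact hf
  | succ N ih => exact hf.add ((measurable_const.max (ih.comp hT)))

lemma abs_maxB_le : ∀ (N : ℕ) (x : X), |maxB T f N x| ≤ ∑ k ∈ Finset.range (N + 1), |f (T^[k] x)| := by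
  intro N
  induction N with
  | zero => intro x; simp [maxB]
  | succ N ih =>
    intro x
    have h1 : |maxB T f (N+1) x| ≤ |f x| + |maxB T f N (T x)| := by
      refine (abs_add_le _ _).trans (add_le_add le_rfl ?_)
      rw [abs_of_nonneg (le_max_left _ _)]
      exact max_le (abs_nonneg _) (le_abs_self _)
    have h2 : ∑ k ∈ Finset.range (N + 1 + 1), |f (T^[k] x)|
        = |f x| + ∑ k ∈ Finset.range (N + 1), |f (T^[k] (T x))| := by
      rw [Finset.sum_range_succ' (fun k => |f (T^[k] x)|)]
      simp only [Function.iterate_succ_apply, Function.iterate_zero_apply]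
      ring
    rw [h2]
    linarith [ih (T x), h1]

lemma integrable_maxB (hT : MeasurePreserving T μ μ) (hf : Measurable f)
    (hfi : Integrable f μ) (N : ℕ) : Integrable (maxB T f N) μ := by
  have hint : Integrable (fun x => ∑ k ∈ Finset.range (N + 1), |f (T^[k] x)|) μ := by
    apply integrable_finset_sum
    intro k _
    have : Integrable (fun x => f (T^[k] x)) μ := by
      have h2 : Integrable f (Measure.map (T^[k]) μ) := by rwa [(hT.iterate k).map_eq]
      exact (integrable_map_measure (by rw [(hT.iterate k).map_eq]; exact hfi.1)
        (hT.measurable.iterate k).aemeasurable).mp h2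
    exact this.abs
  exact (hint.mono' ((measurable_maxB hT.measurable hf N).aestronglyMeasurable)
    (Filter.Eventually.of_forall fun x => by
      simpa using (abs_maxB_le N x)))

lemma integral_comp_mp (hT : MeasurePreserving T μ μ) {g : X → ℝ}
    (hg : AEStronglyMeasurable g μ) :
    ∫ x, g (T x) ∂μ = ∫ x, g x ∂μ := by
  conv_rhs => rw [← hT.map_eq]
  rw [integral_map hT.measurable.aemeasurable (by rwa [hT.map_eq])]

lemma integrable_comp_mp (hT : MeasurePreserving T μ μ) {g : X → ℝ} (hg : Integrable g μ) :
    Integrable (fun x => g (T x)) μ := by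
  have h2 : Integrable g (Measure.map T μ) := by rwa [hT.map_eq]
  exact (integrable_map_measure (by rw [hT.map_eq]; exact hg.1 :
    AEStronglyMeasurable g (Measure.map T μ)) hT.measurable.aemeasurable).mp h2

/-- Hopf's maximal ergodic theorem. -/
lemma maximal_ergodic (hT : MeasurePreserving T μ μ) (hf : Measurable f)
    (hfi : Integrable f μ) :
    0 ≤ ∫ x in {x | ∃ n : ℕ, 0 < birkhoff T f (n + 1) x}, f x ∂μ := by
  set B : ℕ → Set X := fun N => {x | 0 < maxB T f N x} with hB
  have hBmeas : ∀ N, MeasurableSet (B N) := fun N =>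
    measurableSet_lt measurable_const (measurable_maxB hT.measurable hf N)
  have hBmono : Monotone B := by
    apply monotone_nat_of_le_succ
    intro N x hx
    exact lt_of_lt_of_le hx (maxB_mono N x)
  have hUnion : (⋃ N, B N) = {x | ∃ n : ℕ, 0 < birkhoff T f (n + 1) x} := by
    ext x
    simp only [Set.mem_iUnion, Set.mem_setOf_eq, hB]
    constructor
    · rintro ⟨N, hN⟩
      obtain ⟨n, _, he⟩ := maxB_exists N x
      exact ⟨n, he ▸ hN⟩
    · rintro ⟨n, hn⟩
      exact ⟨n, lt_of_lt_of_le hn (birkhoff_le_maxB n x n le_rfl)⟩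
  have step : ∀ N, 0 ≤ ∫ x in B N, f x ∂μ := by
    intro N
    set P : X → ℝ := fun x => max 0 (maxB T f N x) with hP
    have hPmeas : Measurable P := measurable_const.max (measurable_maxB hT.measurable hf N)
    have hPint : Integrable P μ := by
      refine (integrable_maxB hT hf hfi N).abs.mono' hPmeas.aestronglyMeasurable ?_
      refine Filter.Eventually.of_forall fun x => ?_
      rw [Real.norm_eq_abs, abs_of_nonneg (le_max_left _ _)]
      exact max_le (abs_nonneg _) (le_abs_self _)
    have hPT : Integrable (fun x => P (T x)) μ := integrable_comp_mp hT hPint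
    have key : ∀ x ∈ B N, P x - P (T x) ≤ f x := by
      intro x hx
      have h1 : P x = maxB T f N x := max_eq_right (le_of_lt hx)
      have h2 : maxB T f (N + 1) x = f x + max 0 (maxB T f N (T x)) := rfl
      have h3 := maxB_mono (T := T) (f := f) N x
      rw [h1]
      have : P (T x) = max 0 (maxB T f N (T x)) := rfl
      rw [this]
      linarith
    have e1 : ∫ x in B N, P x ∂μ = ∫ x, P x ∂μ := by
      refine setIntegral_eq_integral_of_forall_compl_eq_zero fun x hx => ?_
      have : maxB T f N x ≤ 0 := not_lt.mp hx
      exact max_eq_left this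
    have e2 : ∫ x in B N, P (T x) ∂μ ≤ ∫ x, P (T x) ∂μ :=
      setIntegral_le_integral hPT (Filter.Eventually.of_forall fun x => le_max_left _ _)
    have e3 : ∫ x, P (T x) ∂μ = ∫ x, P x ∂μ := integral_comp_mp hT hPint.1
    have e4 : ∫ x in B N, (P x - P (T x)) ∂μ ≤ ∫ x in B N, f x ∂μ := by
      refine setIntegral_mono_on (hPint.integrableOn.sub hPT.integrableOn)
        hfi.integrableOn (hBmeas N) key
    have e5 : ∫ x in B N, (P x - P (T x)) ∂μ
        = ∫ x in B N, P x ∂μ - ∫ x in B N, P (T x) ∂μ :=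
      integral_sub hPint.integrableOn hPT.integrableOn
    linarith
  have htendsto := tendsto_setIntegral_of_monotone hBmeas hBmono
    (hUnion ▸ hfi.integrableOn :
      IntegrableOn f (⋃ N, B N) μ)
  rw [hUnion] at htendsto
  exact ge_of_tendsto' htendsto step

lemma birkhoff_indicator_mono (T : X → X) (E : Set X) (x : X) :
    Monotone (fun n => birkhoff T (E.indicator fun _ => (1:ℝ)) n x) := by
  apply monotone_nat_of_le_succ
  intro n
  rw [birkhoff_succ]
  have : (0:ℝ) ≤ E.indicator (fun _ => (1:ℝ)) (T^[n] x) := Set.indicator_nonneg (by simp) _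
  linarith

lemma birkhoff_indicator_nonneg (T : X → X) (E : Set X) (n : ℕ) (x : X) :
    0 ≤ birkhoff T (E.indicator fun _ => (1:ℝ)) n x :=
  Finset.sum_nonneg fun k _ => Set.indicator_nonneg (by simp) _

/-- Almost every point visits `E` infinitely often; hence the Birkhoff sums of the
indicator of `E` tend to infinity. -/
lemma ae_tendsto_birkhoff_indicator (hT : Ergodic T μ) (hTc : Conservative T μ)
    {E : Set X} (hEmeas : MeasurableSet E) (hE : μ E ≠ 0) :
    ∀ᵐ x ∂μ, Tendsto (fun n => birkhoff T (E.indicator fun _ => (1:ℝ)) n x) atTop atTop := by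
  set W : Set X := {x | ∃ᶠ n in atTop, T^[n] x ∈ E} with hW
  have hWmeas : MeasurableSet W := by
    have : W = ⋂ N, ⋃ n, ⋃ (_ : N ≤ n), (T^[n]) ⁻¹' E := by
      ext x
      simp [hW, Filter.frequently_atTop, Set.mem_iInter, Set.mem_iUnion]
    rw [this]
    exact MeasurableSet.iInter fun N => MeasurableSet.iUnion fun n =>
      MeasurableSet.iUnion fun _ => hEmeas.preimage (hT.toMeasurePreserving.measurable.iterate n)
  have hWinv : T ⁻¹' W = W := by
    ext x
    simp only [Set.mem_preimage, hW, Set.mem_setOf_eq]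
    constructor
    · intro h
      rw [Filter.frequently_atTop] at h ⊢
      intro a
      obtain ⟨b, hb, hmem⟩ := h a
      exact ⟨b + 1, le_trans hb (Nat.le_succ b), by rwa [Function.iterate_succ_apply]⟩
    · intro h
      rw [Filter.frequently_atTop] at h ⊢
      intro a
      obtain ⟨b, hb, hmem⟩ := h (a + 1)
      obtain ⟨c, rfl⟩ := Nat.exists_eq_add_of_le (le_trans (Nat.le_add_left 1 a) hb)
      exact ⟨c, by omega, by rwa [Nat.add_comm, Function.iterate_add_apply] at hmem⟩
  rcases hT.ae_empty_or_univ hWmeas hWinv with h | h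
  · exfalso
    have h0 : μ W = 0 := ae_eq_empty.mp h
    have h1 := hTc.ae_mem_imp_frequently_image_mem hEmeas.nullMeasurableSet
    have h2 : μ (E \ W) = 0 := by
      refine measure_mono_null ?_ (ae_iff.mp h1)
      intro x hx
      simp only [Set.mem_setOf_eq, Classical.not_imp]
      exact ⟨hx.1, hx.2⟩
    have : μ E ≤ μ (E \ W) + μ W := by
      refine (measure_mono ?_).trans (measure_union_le _ _)
      intro x hx
      by_cases hxW : x ∈ W
      · exact Set.mem_union_right _ hxW
      · exact Set.mem_union_left _ ⟨hx, hxW⟩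
    rw [h0, h2] at this
    simp at this
    exact hE this
  · rw [ae_eq_univ] at h
    have : ∀ x ∈ W, Tendsto (fun n => birkhoff T (E.indicator fun _ => (1:ℝ)) n x) atTop atTop := by
      intro x hx
      apply tendsto_atTop_atTop_of_monotone (birkhoff_indicator_mono T E x)
      intro b
      obtain ⟨m, hm⟩ : ∃ m : ℕ, b ≤ m := exists_nat_ge b
      suffices h : ∀ m : ℕ, ∃ n, (m : ℝ) ≤ birkhoff T (E.indicator fun _ => (1:ℝ)) n x by
        obtain ⟨n, hn⟩ := h m
        exact ⟨n, le_trans hm hn⟩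
      intro m
      induction m with
      | zero => exact ⟨0, by simp [birkhoff]⟩
      | succ m ih =>
        obtain ⟨n, hn⟩ := ih
        obtain ⟨k, hk, hkE⟩ := Filter.frequently_atTop.mp hx n
        refine ⟨k + 1, ?_⟩
        rw [birkhoff_succ]
        have h1 : birkhoff T (E.indicator fun _ => (1:ℝ)) n x ≤
            birkhoff T (E.indicator fun _ => (1:ℝ)) k x :=
          birkhoff_indicator_mono T E x hk
        have h2 : E.indicator (fun _ => (1:ℝ)) (T^[k] x) = 1 := Set.indicator_of_mem hkE _
        push_cast
        rw [h2]
        linarith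
    filter_upwards [(ae_iff.mpr h : ∀ᵐ x ∂μ, x ∈ W)] with x hx using this x hx

section Ratio

variable {E : Set X}

/-- Measurability of "frequently" sets built from Birkhoff sums. -/
lemma measurable_freqSet (hT : Measurable T) (hf : Measurable f) {g : X → ℝ}
    (hg : Measurable g) (r : ℝ) :
    MeasurableSet {x | ∃ᶠ n in atTop, r * birkhoff T g n x ≤ birkhoff T f n x} := by
  have : {x | ∃ᶠ n in atTop, r * birkhoff T g n x ≤ birkhoff T f n x}
      = ⋂ N, ⋃ n, ⋃ (_ : N ≤ n), {x | r * birkhoff T g n x ≤ birkhoff T f n x} := by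
    ext x
    simp [Filter.frequently_atTop, Set.mem_iInter, Set.mem_iUnion]
  rw [this]
  exact MeasurableSet.iInter fun N => MeasurableSet.iUnion fun n => MeasurableSet.iUnion fun _ =>
    measurableSet_le ((measurable_birkhoff hT hg n).const_mul r) (measurable_birkhoff hT hf n)

/-- Key step for Hopf's ratio ergodic theorem: for `q` greater than `∫ f`, the set where
`S_n f ≥ q ⬝ S_n 1_E` frequently is null. -/
lemma Dq_null (hT : Ergodic T μ) (hTc : Conservative T μ)
    (hEmeas : MeasurableSet E) (hE1 : μ E = 1)
    (hf : Measurable f) (hfi : Integrable f μ)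
    {q : ℝ} (hq : ∫ y, f y ∂μ < q) :
    μ {x | ∃ᶠ n in atTop,
      q * birkhoff T (E.indicator fun _ => (1:ℝ)) n x ≤ birkhoff T f n x} = 0 := by
  set g : X → ℝ := E.indicator fun _ => (1:ℝ) with hgdef
  have hgmeas : Measurable g := measurable_const.indicator hEmeas
  have hgi : Integrable g μ := by
    rw [hgdef, integrable_indicator_iff hEmeas]
    exact integrableOn_const (by rw [hE1]; exact ENNReal.one_ne_top)
  have hgint : ∫ y, g y ∂μ = 1 := by
    rw [hgdef, integral_indicator_const (1:ℝ) hEmeas, measureReal_def, hE1]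
    simp
  obtain ⟨b, hb1, hb2⟩ := exists_rat_btwn hq
  set Dset : ℚ → Set X :=
    fun r => {x | ∃ᶠ n in atTop, (r:ℝ) * birkhoff T g n x ≤ birkhoff T f n x} with hDset
  have hDsetMeas : ∀ r, MeasurableSet (Dset r) := fun r =>
    measurable_freqSet hT.toMeasurePreserving.measurable hf hgmeas (r:ℝ)
  set D : Set X := ⋃ (r : ℚ), ⋃ (_ : b < r), Dset r with hDdef
  have hDmeas : MeasurableSet D :=
    MeasurableSet.iUnion fun r => MeasurableSet.iUnion fun _ => hDsetMeas r
  set G : Set X := {x | Tendsto (fun n => birkhoff T g n x) atTop atTop} with hGdef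
  have hG : ∀ᵐ x ∂μ, x ∈ G :=
    ae_tendsto_birkhoff_indicator hT hTc hEmeas (by rw [hE1]; exact one_ne_zero)
  -- shift identities
  have ef : ∀ (n : ℕ) (x : X), birkhoff T f n (T x) = birkhoff T f (n+1) x - f x := by
    intro n x; rw [birkhoff_succ']; ring
  have eg : ∀ (n : ℕ) (x : X), birkhoff T g n (T x) = birkhoff T g (n+1) x - g x := by
    intro n x; rw [birkhoff_succ']; ring
  have dirA : ∀ x, x ∈ G → T x ∈ D → x ∈ D := by
    intro x hxG hTxD
    simp only [hDdef, Set.mem_iUnion] at hTxD ⊢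
    obtain ⟨r, hr, hfreq⟩ := hTxD
    have hbr : (b:ℝ) < (r:ℝ) := by exact_mod_cast hr
    obtain ⟨r', hr'1, hr'2⟩ := exists_rat_btwn hbr
    refine ⟨r', by exact_mod_cast hr'1, ?_⟩
    have hrr' : (0:ℝ) < (r:ℝ) - (r':ℝ) := by linarith
    have hev : Tendsto (fun n => ((r:ℝ) - (r':ℝ)) * birkhoff T g n x) atTop atTop :=
      (hxG : Tendsto _ atTop atTop).const_mul_atTop hrr'
    obtain ⟨N0, hN0⟩ := Filter.eventually_atTop.mp
      (hev.eventually_ge_atTop (-(f x - (r:ℝ) * g x)))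
    simp only [hDset, Set.mem_setOf_eq] at hfreq ⊢
    rw [Filter.frequently_atTop] at hfreq ⊢
    intro N
    obtain ⟨n, hn, hP⟩ := hfreq (max N N0)
    refine ⟨n + 1, le_trans (le_max_left N N0) (by omega), ?_⟩
    rw [ef, eg] at hP
    have hb' := hN0 (n + 1) (by have := le_trans (le_max_right N N0) hn; omega)
    have hexp : ((r:ℝ) - (r':ℝ)) * birkhoff T g (n+1) x
        = (r:ℝ) * birkhoff T g (n+1) x - (r':ℝ) * birkhoff T g (n+1) x := by ring
    nlinarith [hP, hb', hexp]
  have dirB : ∀ x, x ∈ G → x ∈ D → T x ∈ D := by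
    intro x hxG hxD
    simp only [hDdef, Set.mem_iUnion] at hxD ⊢
    obtain ⟨r, hr, hfreq⟩ := hxD
    have hbr : (b:ℝ) < (r:ℝ) := by exact_mod_cast hr
    obtain ⟨r', hr'1, hr'2⟩ := exists_rat_btwn hbr
    refine ⟨r', by exact_mod_cast hr'1, ?_⟩
    have hrr' : (0:ℝ) < (r:ℝ) - (r':ℝ) := by linarith
    have hxGT : Tendsto (fun m => birkhoff T g m (T x)) atTop atTop := by
      have h1 : Tendsto (fun m => birkhoff T g (m+1) x) atTop atTop :=
        hxG.comp (tendsto_add_atTop_nat 1)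
      have h2 := tendsto_atTop_add_const_right atTop (-(g x)) h1
      refine h2.congr fun m => ?_
      rw [eg]; ring
    have hev : Tendsto (fun m => ((r:ℝ) - (r':ℝ)) * birkhoff T g m (T x)) atTop atTop :=
      hxGT.const_mul_atTop hrr'
    obtain ⟨N0, hN0⟩ := Filter.eventually_atTop.mp
      (hev.eventually_ge_atTop (-((r:ℝ) * g x - f x)))
    simp only [hDset, Set.mem_setOf_eq] at hfreq ⊢
    rw [Filter.frequently_atTop] at hfreq ⊢
    intro N
    obtain ⟨n, hn, hP⟩ := hfreq (max (N + 1) (N0 + 1))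
    have hn1 : 1 ≤ n := le_trans (by omega) (le_trans (le_max_left _ _) hn)
    obtain ⟨m, rfl⟩ : ∃ m, n = m + 1 := ⟨n - 1, by omega⟩
    refine ⟨m, by have := le_trans (le_max_left (N+1) (N0+1)) hn; omega, ?_⟩
    have hPf : (r:ℝ) * (g x + birkhoff T g m (T x)) ≤ f x + birkhoff T f m (T x) := by
      rw [← birkhoff_succ', ← birkhoff_succ']
      exact hP
    have hb' := hN0 m (by have := le_trans (le_max_right (N+1) (N0+1)) hn; omega)
    have hexp : ((r:ℝ) - (r':ℝ)) * birkhoff T g m (T x)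
        = (r:ℝ) * birkhoff T g m (T x) - (r':ℝ) * birkhoff T g m (T x) := by ring
    nlinarith [hPf, hb', hexp]
  have hinv : T ⁻¹' D =ᵐ[μ] D := by
    refine Filter.eventuallyEq_set.mpr (hG.mono fun x hx => ?_)
    exact ⟨fun h => dirA x hx h, fun h => dirB x hx h⟩
  rcases hT.quasiErgodic.ae_empty_or_univ₀ hDmeas.nullMeasurableSet hinv with hD | hD
  · -- D is null: conclude
    obtain ⟨r'', hr''1, hr''2⟩ := exists_rat_btwn hb2
    refine measure_mono_null ?_ (ae_eq_empty.mp hD)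
    intro x hx
    simp only [Set.mem_setOf_eq] at hx
    simp only [hDdef, Set.mem_iUnion]
    refine ⟨r'', by exact_mod_cast hr''1, ?_⟩
    simp only [hDset, Set.mem_setOf_eq]
    refine hx.mono fun n hn => ?_
    have hSg := birkhoff_indicator_nonneg T E n x
    rw [← hgdef] at hSg
    have : (r'':ℝ) * birkhoff T g n x ≤ q * birkhoff T g n x :=
      mul_le_mul_of_nonneg_right (le_of_lt hr''2) hSg
    exact le_trans this hn
  · -- D is co-null: contradiction with the maximal ergodic theorem
    exfalso
    set h : X → ℝ := fun y => f y - (b:ℝ) * g y with hhdef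
    have hhmeas : Measurable h := hf.sub (hgmeas.const_mul (b:ℝ))
    have hhint : Integrable h μ := hfi.sub (hgi.const_mul (b:ℝ))
    set A : Set X := {x | ∃ n : ℕ, 0 < birkhoff T h (n + 1) x} with hAdef
    have hDc : ∀ᵐ x ∂μ, x ∈ D := by
      have := ae_eq_univ.mp hD
      rw [ae_iff]
      exact this
    have hAc : ∀ᵐ x ∂μ, x ∈ A := by
      filter_upwards [hG, hDc] with x hxG hxD
      simp only [hDdef, Set.mem_iUnion] at hxD
      obtain ⟨r, hr, hfreq⟩ := hxD
      have hbr : (b:ℝ) < (r:ℝ) := by exact_mod_cast hr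
      obtain ⟨n, hn1, hn2, hn3⟩ : ∃ n, 1 ≤ n ∧ 1 ≤ birkhoff T g n x ∧
          (r:ℝ) * birkhoff T g n x ≤ birkhoff T f n x := by
        have hev : ∀ᶠ n in atTop, 1 ≤ birkhoff T g n x := hxG.eventually_ge_atTop 1
        obtain ⟨N0, hN0⟩ := Filter.eventually_atTop.mp hev
        obtain ⟨n, hn, hP⟩ := Filter.frequently_atTop.mp hfreq (max 1 N0)
        exact ⟨n, le_trans (le_max_left _ _) hn,
          hN0 n (le_trans (le_max_right _ _) hn), hP⟩
      obtain ⟨m, rfl⟩ : ∃ m, n = m + 1 := ⟨n - 1, by omega⟩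
      refine ⟨m, ?_⟩
      have hsub : birkhoff T h (m+1) x
          = birkhoff T f (m+1) x - (b:ℝ) * birkhoff T g (m+1) x := birkhoff_sub T f g (b:ℝ) (m+1) x
      rw [hsub]
      nlinarith [hn2, hn3, hbr]
    have hmax := maximal_ergodic hT.toMeasurePreserving hhmeas hhint
    have hA1 : A =ᵐ[μ] Set.univ :=
      Filter.eventuallyEq_set.mpr (hAc.mono fun x hx => by simp [hx])
    have hrw : ∫ x in A, h x ∂μ = ∫ x, h x ∂μ := by
      rw [Measure.restrict_congr_set hA1, Measure.restrict_univ]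
    rw [← hAdef, hrw] at hmax
    have hint2 : ∫ x, h x ∂μ = (∫ y, f y ∂μ) - (b:ℝ) := by
      rw [hhdef]
      rw [integral_sub hfi (hgi.const_mul (b:ℝ)), integral_const_mul, hgint]
      ring
    rw [hint2] at hmax
    linarith

end Ratio
lemma birkhoff_neg (T : X → X) (f : X → ℝ) (n : ℕ) (x : X) :
    birkhoff T (fun y => -f y) n x = - birkhoff T f n x := by
  simp [birkhoff]

/-- Hopf's ratio ergodic theorem (with denominator the indicator of a set of measure one). -/
lemma ratio_ergodic (hT : Ergodic T μ) (hTc : Conservative T μ)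
    (hEmeas : MeasurableSet E) (hE1 : μ E = 1)
    (hf : Measurable f) (hfi : Integrable f μ) :
    ∀ᵐ x ∂μ, Tendsto
      (fun n => birkhoff T f n x / birkhoff T (E.indicator fun _ => (1:ℝ)) n x)
      atTop (𝓝 (∫ y, f y ∂μ)) := by
  set g : X → ℝ := E.indicator fun _ => (1:ℝ) with hgdef
  set I : ℝ := ∫ y, f y ∂μ with hIdef
  have hup : ∀ᵐ x ∂μ, ∀ k : ℕ, ∀ᶠ n in atTop,
      birkhoff T f n x < (I + 1/(k+1)) * birkhoff T g n x := by
    refine ae_all_iff.mpr fun k => ?_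
    have hqI : I < I + 1/(k+1) := by
      have : (0:ℝ) < 1/(k+1) := by positivity
      linarith
    have h0 := Dq_null hT hTc hEmeas hE1 hf hfi hqI
    have h1 : ∀ᵐ x ∂μ, ¬ (∃ᶠ n in atTop,
        (I + 1/(k+1)) * birkhoff T g n x ≤ birkhoff T f n x) := by
      exact measure_eq_zero_iff_ae_notMem.mp h0
    refine h1.mono fun x hx => ?_
    rw [Filter.not_frequently] at hx
    exact hx.mono fun n hn => not_le.mp hn
  have hlow : ∀ᵐ x ∂μ, ∀ k : ℕ, ∀ᶠ n in atTop,
      (I - 1/(k+1)) * birkhoff T g n x < birkhoff T f n x := by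
    refine ae_all_iff.mpr fun k => ?_
    have hnegint : ∫ y, -f y ∂μ = -I := by rw [← integral_neg]
    have hqI : ∫ y, -f y ∂μ < -I + 1/(k+1) := by
      rw [hnegint]
      have : (0:ℝ) < 1/(k+1) := by positivity
      linarith
    have h0 := Dq_null hT hTc hEmeas hE1 hf.neg hfi.neg hqI
    have h1 : ∀ᵐ x ∂μ, ¬ (∃ᶠ n in atTop,
        (-I + 1/(k+1)) * birkhoff T g n x ≤ birkhoff T (fun y => -f y) n x) := by
      exact measure_eq_zero_iff_ae_notMem.mp h0
    refine h1.mono fun x hx => ?_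
    rw [Filter.not_frequently] at hx
    refine hx.mono fun n hn => ?_
    rw [birkhoff_neg] at hn
    have := not_le.mp hn
    linarith
  have hG := ae_tendsto_birkhoff_indicator hT hTc hEmeas (by rw [hE1]; exact one_ne_zero)
  filter_upwards [hup, hlow, hG] with x hxu hxl hxG
  rw [Metric.tendsto_atTop]
  intro ε hε
  obtain ⟨k, hk⟩ := exists_nat_one_div_lt hε
  have h3 : ∀ᶠ n in atTop, 1 ≤ birkhoff T g n x := hxG.eventually_ge_atTop 1
  obtain ⟨N, hN⟩ := Filter.eventually_atTop.mp (((hxu k).and (hxl k)).and h3)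
  refine ⟨N, fun n hn => ?_⟩
  obtain ⟨⟨c1, c2⟩, c3⟩ := hN n hn
  have hSpos : (0:ℝ) < birkhoff T g n x := lt_of_lt_of_le zero_lt_one c3
  rw [Real.dist_eq, abs_lt]
  have d1 : birkhoff T f n x / birkhoff T g n x < I + 1/(k+1) := (div_lt_iff₀ hSpos).mpr (by linarith)
  have d2 : I - 1/(k+1) < birkhoff T f n x / birkhoff T g n x := (lt_div_iff₀ hSpos).mpr (by linarith)
  have hk' : 1/((k:ℝ)+1) < ε := hk
  constructor <;> linarith


end AuxHopf

/-- Lemma 4.1 (lem-hopf): for integrable `f`, the Birkhoff sums over `N + m(N,E,x)`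
steps, normalised by the number of visits `R_{E,N,m}(x)`, converge a.e. on `E` to
`∫ f dμ`. -/
theorem statement11 {X : Type*} [MeasurableSpace X] (μ : Measure X) [SigmaFinite μ]
    (T : X → X) (hTcons : Conservative T μ) (hTerg : Ergodic T μ)
    (hXinf : μ Set.univ = ∞)
    (E : Set X) (hEmeas : MeasurableSet E) (hE1 : μ E = 1)
    (f : X → ℝ) (hf : Integrable f μ) :
    ∀ᵐ x ∂μ.restrict E, Tendsto
      (fun N : ℕ => (∑ k ∈ Finset.range (N + excursionM T E N x), f (T^[k] x)) /
        (visitsM T E N x : ℝ))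
      atTop (𝓝 (∫ y, f y ∂μ)) := by
  have hT := hTerg.toMeasurePreserving
  set g : X → ℝ := E.indicator fun _ => (1:ℝ) with hgdef
  set f' : X → ℝ := hf.1.mk f with hf'def
  have hf'meas : Measurable f' := hf.1.stronglyMeasurable_mk.measurable
  have hff' : f =ᵐ[μ] f' := hf.1.ae_eq_mk
  have hfi' : Integrable f' μ := hf.congr hff'
  have hint : ∫ y, f' y ∂μ = ∫ y, f y ∂μ := integral_congr_ae hff'.symm
  have hratio := ratio_ergodic hTerg hTcons hEmeas hE1 hf'meas hfi'
  have hG := ae_tendsto_birkhoff_indicator hTerg hTcons hEmeas (by rw [hE1]; exact one_ne_zero)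
  have hC : ∀ᵐ x ∂μ, ∀ k : ℕ, f (T^[k] x) = f' (T^[k] x) :=
    ae_all_iff.mpr fun k => (hT.iterate k).quasiMeasurePreserving.ae_eq hff'
  refine ae_restrict_of_ae ?_
  filter_upwards [hratio, hG, hC] with x hxr hxG hxC
  rw [hint] at hxr
  -- `S_n f' / S_{n+1} g → ∫ f`
  have hstep : Tendsto (fun n => birkhoff T f' n x / birkhoff T g (n+1) x) atTop
      (𝓝 (∫ y, f y ∂μ)) := by
    have hsucc : ∀ n, birkhoff T g (n+1) x = birkhoff T g n x + g (T^[n] x) :=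
      fun n => birkhoff_succ T g n x
    have hg0 : ∀ y, 0 ≤ g y := fun y => Set.indicator_nonneg (by simp) y
    have hg1 : ∀ y, g y ≤ 1 := fun y => by
      by_cases hy : y ∈ E <;> simp [hgdef, hy]
    have hu : Tendsto (fun n => birkhoff T g n x / birkhoff T g (n+1) x) atTop (𝓝 1) := by
      have hlow : ∀ᶠ n in atTop, 1 - 1/(birkhoff T g n x + 1)
          ≤ birkhoff T g n x / birkhoff T g (n+1) x := by
        filter_upwards [hxG.eventually_ge_atTop 1] with n hn
        have h1 : (0:ℝ) < birkhoff T g n x := lt_of_lt_of_le zero_lt_one hn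
        have h2 : (0:ℝ) < birkhoff T g (n+1) x := by
          rw [hsucc n]; have := hg0 (T^[n] x); linarith
        have e : 1 - 1/(birkhoff T g n x + 1)
            = birkhoff T g n x / (birkhoff T g n x + 1) := by field_simp; ring
        rw [e]
        gcongr
        rw [hsucc n]; have := hg1 (T^[n] x); linarith
      have hup' : ∀ᶠ n in atTop, birkhoff T g n x / birkhoff T g (n+1) x ≤ 1 := by
        filter_upwards [hxG.eventually_ge_atTop 1] with n hn
        have h2 : (0:ℝ) < birkhoff T g (n+1) x := by
          rw [hsucc n]
          have := hg0 (T^[n] x); linarith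
        rw [div_le_one h2, hsucc n]
        have := hg0 (T^[n] x); linarith
      have hl : Tendsto (fun n => 1 - 1/(birkhoff T g n x + 1)) atTop (𝓝 1) := by
        have hinf : Tendsto (fun n => birkhoff T g n x + 1) atTop atTop :=
          tendsto_atTop_add_const_right atTop 1 hxG
        have h0 : Tendsto (fun n => 1/(birkhoff T g n x + 1)) atTop (𝓝 0) := by
          simpa [one_div, Function.comp_def] using tendsto_inv_atTop_zero.comp hinf
        simpa using tendsto_const_nhds.sub h0
      exact tendsto_of_tendsto_of_tendsto_of_le_of_le' hl tendsto_const_nhds hlow hup'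
    have hmul := hxr.mul hu
    rw [mul_one] at hmul
    refine hmul.congr' ?_
    filter_upwards [hxG.eventually_ge_atTop 1] with n hn
    have hb0 : birkhoff T g n x ≠ 0 := ne_of_gt (lt_of_lt_of_le zero_lt_one hn)
    have hb1 : birkhoff T g (n+1) x ≠ 0 := by
      have h2 : (0:ℝ) < birkhoff T g (n+1) x := by
        rw [hsucc n]
        have := hg0 (T^[n] x)
        nlinarith [lt_of_lt_of_le zero_lt_one hn]
      exact ne_of_gt h2
    field_simp; rfl
  have hφ : Tendsto (fun N => N + excursionM T E N x) atTop atTop :=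
    tendsto_atTop_mono (fun N => Nat.le_add_right N _) tendsto_id
  have hcomp := hstep.comp hφ
  refine Tendsto.congr (fun N => ?_) hcomp
  simp only [Function.comp_apply]
  have e1 : birkhoff T f' (N + excursionM T E N x) x
      = ∑ k ∈ Finset.range (N + excursionM T E N x), f (T^[k] x) :=
    (Finset.sum_congr rfl fun k _ => (hxC k).symm)
  have e2 : birkhoff T g (N + excursionM T E N x + 1) x = ((visitsM T E N x : ℕ) : ℝ) := by
    rw [visitsM, visits]
    push_cast
    refine Finset.sum_congr rfl fun k _ => ?_
    by_cases hk : T^[k] x ∈ E <;> simp [hgdef, hk]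
  rw [e1, e2]

end Paper
end
end

section
/- For μ-a.e. x ∈ E it eventually holds (for all N large enough) that N < τ¹_{E,x}(R_{E,N,m}(x)) ≤ N + M²_{N,m}(x), where M²_{N,m}(x) denotes the second maximum of {φ_E(T_E^{k−1}(x)) : k = 1,…,R_{E,N,m}(x)}, which may coincide with the maximum in case of equality. -/
open MeasureTheory Filter Set Topology Asymptotics

open scoped ENNReal NNReal

noncomputable section

namespace Paper

variable {X : Type*}

section Aux12

variable {Y : Type*} {T : Y → Y} {E : Set Y} {x : Y}

private lemma ret_spec (h : ∃ n, 0 < n ∧ T^[n] x ∈ E) :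
    0 < retTime T E x ∧ T^[retTime T E x] x ∈ E ∧
      ∀ j, 0 < j → j < retTime T E x → T^[j] x ∉ E := by
  have hmem : retTime T E x ∈ {k : ℕ | 0 < k ∧ T^[k] x ∈ E} := Nat.sInf_mem h
  refine ⟨hmem.1, hmem.2, fun j hj hlt hmemE => ?_⟩
  have : retTime T E x ≤ j :=
    Nat.sInf_le (show j ∈ {k : ℕ | 0 < k ∧ T^[k] x ∈ E} from ⟨hj, hmemE⟩)
  omega

/-- Infinitely many returns hypothesis. -/
private def Rets (T : Y → Y) (E : Set Y) (x : Y) : Prop :=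
  ∀ m : ℕ, ∃ n, m < n ∧ T^[n] x ∈ E

private lemma master (Hx : Rets T E x) :
    ∀ n : ℕ, T^[tauRet T E x n] x = (indMap T E)^[n] x ∧
      (∃ k, 0 < k ∧ T^[k] ((indMap T E)^[n] x) ∈ E) := by
  intro n
  induction n with
  | zero =>
    refine ⟨by simp [tauRet], ?_⟩
    obtain ⟨j, hj, hjE⟩ := Hx 0
    exact ⟨j, hj, by simpa using hjE⟩
  | succ n ih =>
    obtain ⟨hτ, hret⟩ := ih
    have hτs : tauRet T E x (n + 1)
        = tauRet T E x n + retTime T E ((indMap T E)^[n] x) := by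
      simp [tauRet, Finset.sum_range_succ]
    have hstep : T^[tauRet T E x (n + 1)] x = (indMap T E)^[n + 1] x := by
      rw [hτs, add_comm, Function.iterate_add_apply, hτ,
        Function.iterate_succ_apply']
      rfl
    refine ⟨hstep, ?_⟩
    obtain ⟨j, hj, hjE⟩ := Hx (tauRet T E x (n + 1))
    refine ⟨j - tauRet T E x (n + 1), by omega, ?_⟩
    rw [← hstep, ← Function.iterate_add_apply]
    have : j - tauRet T E x (n + 1) + tauRet T E x (n + 1) = j := by omega
    rw [this]; exact hjE

private lemma phi_pos (Hx : Rets T E x) (n : ℕ) :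
    0 < retTime T E ((indMap T E)^[n] x) :=
  (ret_spec (master Hx n).2).1

private lemma tau_succ (n : ℕ) :
    tauRet T E x (n + 1) = tauRet T E x n + retTime T E ((indMap T E)^[n] x) := by
  simp [tauRet, Finset.sum_range_succ]

private lemma tau_mono (Hx : Rets T E x) : StrictMono (tauRet T E x) :=
  strictMono_nat_of_lt_succ fun n => by
    have := phi_pos Hx n; rw [tau_succ]; omega

private lemma tau_ge (Hx : Rets T E x) (n : ℕ) : n ≤ tauRet T E x n := by
  induction n with
  | zero => simp
  | succ n ih => have := phi_pos Hx n; rw [tau_succ]; omega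

private lemma mem_tau (hx : x ∈ E) (Hx : Rets T E x) (n : ℕ) :
    T^[tauRet T E x n] x ∈ E := by
  rw [(master Hx n).1]
  cases n with
  | zero => simpa using hx
  | succ n =>
    rw [Function.iterate_succ_apply']
    exact (ret_spec (master Hx n).2).2.1

private lemma between (Hx : Rets T E x) (j : ℕ) :
    ∃ n, tauRet T E x n ≤ j ∧ j < tauRet T E x (n + 1) := by
  induction j with
  | zero =>
    have ht0 : tauRet T E x 0 = 0 := by simp [tauRet]
    have ht1 := tau_succ (T := T) (E := E) (x := x) 0
    have hp := phi_pos Hx 0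
    exact ⟨0, by omega, by omega⟩
  | succ j ih =>
    obtain ⟨n, h1, h2⟩ := ih
    rcases Nat.lt_or_ge (j + 1) (tauRet T E x (n + 1)) with h | h
    · exact ⟨n, by omega, h⟩
    · have he : tauRet T E x (n + 1) = j + 1 := by omega
      refine ⟨n + 1, by omega, ?_⟩
      have := phi_pos Hx (n + 1); rw [tau_succ]; omega

private lemma eq_tau_of_mem (Hx : Rets T E x) {j : ℕ} (hj : T^[j] x ∈ E) :
    ∃ n, tauRet T E x n = j := by
  obtain ⟨n, h1, h2⟩ := between Hx j
  rcases Nat.eq_or_lt_of_le h1 with he | hlt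
  · exact ⟨n, he⟩
  · exfalso
    have hd : j = tauRet T E x n + (j - tauRet T E x n) := by omega
    have hjx : T^[j] x = T^[j - tauRet T E x n] ((indMap T E)^[n] x) := by
      rw [← (master Hx n).1, ← Function.iterate_add_apply, add_comm, ← hd]
    have hlt2 : j - tauRet T E x n < retTime T E ((indMap T E)^[n] x) := by
      have := tau_succ (T := T) (E := E) (x := x) n; omega
    exact (ret_spec (master Hx n).2).2.2 _ (by omega) hlt2 (hjx ▸ hj)

private lemma visits_spec (hx : x ∈ E) (Hx : Rets T E x) (N : ℕ) :
    0 < visits T E N x ∧ tauRet T E x (visits T E N x - 1) ≤ N ∧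
      N < tauRet T E x (visits T E N x) := by
  induction N with
  | zero =>
    have h0 : visits T E 0 x = 1 := by
      simp [visits, Set.indicator_apply, hx]
    have ht0 : tauRet T E x 0 = 0 := by simp [tauRet]
    have ht1 : tauRet T E x 1 = tauRet T E x 0 + retTime T E ((indMap T E)^[0] x) :=
      tau_succ 0
    have hp := phi_pos Hx 0
    rw [h0]
    exact ⟨one_pos, by simpa using ht0.le, by omega⟩
  | succ N ih =>
    obtain ⟨h1, h2, h3⟩ := ih
    have hrec : visits T E (N + 1) x
        = visits T E N x + E.indicator (fun _ => (1 : ℕ)) (T^[N + 1] x) := by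
      simp [visits, Finset.sum_range_succ]
    by_cases hmem : T^[N + 1] x ∈ E
    · have hrec' : visits T E (N + 1) x = visits T E N x + 1 := by
        rw [hrec, Set.indicator_of_mem hmem]
      obtain ⟨m, hm⟩ := eq_tau_of_mem Hx hmem
      have hmR : visits T E N x ≤ m := by
        by_contra hc
        have : tauRet T E x m ≤ tauRet T E x (visits T E N x - 1) :=
          (tau_mono Hx).monotone (by omega)
        omega
      have hτR : tauRet T E x (visits T E N x) ≤ N + 1 := by
        have : tauRet T E x (visits T E N x) ≤ tauRet T E x m :=
          (tau_mono Hx).monotone hmR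
        omega
      have hτR' : tauRet T E x (visits T E N x) = N + 1 := by omega
      rw [hrec']
      refine ⟨by omega, by simpa using hτR.trans_eq rfl, ?_⟩
      have := phi_pos Hx (visits T E N x)
      rw [tau_succ]; omega
    · have hrec' : visits T E (N + 1) x = visits T E N x := by
        rw [hrec, Set.indicator_of_notMem hmem, add_zero]
      rw [hrec']
      refine ⟨h1, by omega, ?_⟩
      rcases Nat.lt_or_ge (N + 1) (tauRet T E x (visits T E N x)) with h | h
      · exact h
      · exfalso
        have : tauRet T E x (visits T E N x) = N + 1 := by omega
        exact hmem (this ▸ mem_tau hx Hx (visits T E N x))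

end Aux12
section Aux12b

variable {Y : Type*} {T : Y → Y} {E : Set Y} {x : Y}

private lemma maxret_exists (Hx : Rets T E x) {n : ℕ} (hn : 0 < n) :
    ∃ k < n, retTime T E ((indMap T E)^[k] x) = maxRet T E x n := by
  obtain ⟨k, hk, he⟩ := Finset.exists_mem_eq_sup (Finset.range n)
    (Finset.nonempty_range_iff.mpr (by omega))
    (fun k => retTime T E ((indMap T E)^[k] x))
  exact ⟨k, Finset.mem_range.mp hk, he.symm⟩

private lemma le_maxret {n k : ℕ} (hk : k < n) :
    retTime T E ((indMap T E)^[k] x) ≤ maxRet T E x n := by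
  rw [maxRet]
  exact Finset.le_sup (f := fun k => retTime T E ((indMap T E)^[k] x))
    (Finset.mem_range.mpr hk)

/-- The excursion set. -/
private def ES (T : Y → Y) (E : Set Y) (N : ℕ) (x : Y) : Set ℕ :=
  {k : ℕ | 1 ≤ k ∧ ∃ ℓ, 1 ≤ ℓ ∧ ℓ ≤ N + 1 ∧ ∀ j < k, T^[ℓ + j] x ∉ E}

private lemma es_bound (hx : x ∈ E) (Hx : Rets T E x) {N : ℕ} {k : ℕ}
    (hk : k ∈ ES T E N x) : ∃ i < visits T E N x,
      k + 1 ≤ retTime T E ((indMap T E)^[i] x) := by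
  obtain ⟨hk1, ℓ, hℓ1, hℓ2, hout⟩ := hk
  obtain ⟨n, h1, h2⟩ := between Hx (ℓ - 1)
  have h1' : tauRet T E x n < ℓ := by omega
  have h2' : ℓ ≤ tauRet T E x (n + 1) := by omega
  have hnR : n < visits T E N x := by
    obtain ⟨hv1, hv2, hv3⟩ := visits_spec hx Hx N
    by_contra hc
    have : tauRet T E x (visits T E N x) ≤ tauRet T E x n :=
      (tau_mono Hx).monotone (by omega)
    omega
  refine ⟨n, hnR, ?_⟩
  have hend : ℓ + k ≤ tauRet T E x (n + 1) := by
    by_contra hc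
    exact hout (tauRet T E x (n + 1) - ℓ) (by omega)
      (by
        have : ℓ + (tauRet T E x (n + 1) - ℓ) = tauRet T E x (n + 1) := by omega
        rw [this]; exact mem_tau hx Hx (n + 1))
  have := tau_succ (T := T) (E := E) (x := x) n
  omega

private lemma es_bddAbove (hx : x ∈ E) (Hx : Rets T E x) (N : ℕ) :
    BddAbove (ES T E N x) := by
  refine ⟨tauRet T E x (N + 1), fun k hk => ?_⟩
  obtain ⟨i, hi, hb⟩ := es_bound hx Hx hk
  obtain ⟨hv1, hv2, hv3⟩ := visits_spec hx Hx N
  have hge := tau_ge Hx (visits T E N x - 1)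
  have h1 : tauRet T E x (i + 1) ≤ tauRet T E x (visits T E N x) :=
    (tau_mono Hx).monotone (by omega)
  have h2 : tauRet T E x (visits T E N x) ≤ tauRet T E x (N + 1) :=
    (tau_mono Hx).monotone (by omega)
  have := tau_succ (T := T) (E := E) (x := x) i
  omega

private lemma exc_le (hx : x ∈ E) (Hx : Rets T E x) (N : ℕ) :
    ∃ i < visits T E N x,
      excursionM T E N x ≤ retTime T E ((indMap T E)^[i] x) := by
  have hS : excursionM T E N x = 1 + sSup (ES T E N x) := rfl
  obtain ⟨hv1, hv2, hv3⟩ := visits_spec hx Hx N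
  rcases Set.eq_empty_or_nonempty (ES T E N x) with he | hne
  · refine ⟨0, hv1, ?_⟩
    have hemp : sSup (∅ : Set ℕ) = 0 := csSup_empty
    rw [hS, he, hemp]
    have := phi_pos Hx 0
    omega
  · have hmem := Nat.sSup_mem hne (es_bddAbove hx Hx N)
    obtain ⟨i, hi, hb⟩ := es_bound hx Hx hmem
    exact ⟨i, hi, by omega⟩

private lemma le_exc (hx : x ∈ E) (Hx : Rets T E x) {N i : ℕ}
    (hi : i < visits T E N x) :
    retTime T E ((indMap T E)^[i] x) ≤ excursionM T E N x := by
  set φi := retTime T E ((indMap T E)^[i] x) with hφi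
  obtain ⟨hv1, hv2, hv3⟩ := visits_spec hx Hx N
  rcases Nat.lt_or_ge φi 2 with h2 | h2
  · have h1 : 1 ≤ excursionM T E N x := Nat.le_add_right 1 _
    have := phi_pos Hx i
    omega
  · have hτi : tauRet T E x i ≤ N := by
      have : tauRet T E x i ≤ tauRet T E x (visits T E N x - 1) :=
        (tau_mono Hx).monotone (by omega)
      omega
    have hkmem : φi - 1 ∈ ES T E N x := by
      refine ⟨by omega, tauRet T E x i + 1, by omega, by omega, fun j hj hmem => ?_⟩
      obtain ⟨m, hm⟩ := eq_tau_of_mem Hx hmem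
      have hts := tau_succ (T := T) (E := E) (x := x) i
      have hlow : tauRet T E x i < tauRet T E x m := by omega
      have hhigh : tauRet T E x m < tauRet T E x (i + 1) := by omega
      have h1 : i < m := (tau_mono Hx).lt_iff_lt.mp hlow
      have h2' : m < i + 1 := (tau_mono Hx).lt_iff_lt.mp hhigh
      omega
    have : φi - 1 ≤ sSup (ES T E N x) := le_csSup (es_bddAbove hx Hx N) hkmem
    have hS : excursionM T E N x = 1 + sSup (ES T E N x) := rfl
    omega

private lemma secondmax_ge (Hx : Rets T E x) {n k₁ k₂ : ℕ}
    (h1 : k₁ < n) (h2 : k₂ < n) (hne : k₁ ≠ k₂) :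
    min (retTime T E ((indMap T E)^[k₁] x)) (retTime T E ((indMap T E)^[k₂] x))
      ≤ secondMaxRet T E x n := by
  apply le_csSup
  · refine ⟨maxRet T E x n, fun v hv => ?_⟩
    obtain ⟨j₁, hj₁, j₂, hj₂, -, hveq⟩ := hv
    have := le_maxret (T := T) (E := E) (x := x) hj₁
    omega
  · exact ⟨k₁, h1, k₂, h2, hne, rfl⟩

private lemma key (hx : x ∈ E) (Hx : Rets T E x) (N : ℕ) :
    N < tauRetTrim T E x (visitsM T E N x) ∧
      tauRetTrim T E x (visitsM T E N x) ≤ N + secondMaxRet T E x (visitsM T E N x) := by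
  have hgoal : visitsM T E N x = visits T E (N + excursionM T E N x) x := rfl
  rw [hgoal]
  obtain ⟨i, hiR0, hiφ0⟩ := exc_le hx Hx N
  set m := excursionM T E N x with hm
  obtain ⟨hv1, hv2, hv3⟩ := visits_spec hx Hx N
  obtain ⟨hw1, hw2, hw3⟩ := visits_spec hx Hx (N + m)
  set R := visits T E N x with hR
  set R' := visits T E (N + m) x with hR'
  have hiR : i < R := hiR0
  have hiφ : m ≤ retTime T E ((indMap T E)^[i] x) := hiφ0
  -- φ (R-1) ≤ m hence τ R ≤ N + m hence R < R'
  have hphiR : retTime T E ((indMap T E)^[R - 1] x) ≤ m := le_exc hx Hx (by omega)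
  have hts0 : tauRet T E x R
      = tauRet T E x (R - 1) + retTime T E ((indMap T E)^[R - 1] x) := by
    have hts := tau_succ (T := T) (E := E) (x := x) (R - 1)
    have he : R - 1 + 1 = R := by omega
    rw [he] at hts
    exact hts
  have hτR : tauRet T E x R ≤ N + m := by omega
  have hRR' : R < R' := (tau_mono Hx).lt_iff_lt.mp (by omega)
  -- k : max index for R'
  obtain ⟨k, hkR', hkφ⟩ := maxret_exists Hx (n := R') (by omega)
  have htrim : tauRetTrim T E x R'
      = tauRet T E x R' - retTime T E ((indMap T E)^[k] x) := by
    rw [tauRetTrim, hkφ]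
  constructor
  · -- lower bound
    rw [htrim]
    rcases Nat.lt_or_ge k R with hkR | hkR
    · have : retTime T E ((indMap T E)^[k] x) ≤ m := le_exc hx Hx hkR
      omega
    · have h1 : tauRet T E x (k + 1) ≤ tauRet T E x R' :=
        (tau_mono Hx).monotone (by omega)
      have h2 : tauRet T E x R ≤ tauRet T E x k :=
        (tau_mono Hx).monotone hkR
      have hts := tau_succ (T := T) (E := E) (x := x) k
      omega
  · -- upper bound
    rw [htrim]
    have hts : tauRet T E x R' = tauRet T E x (R' - 1)
        + retTime T E ((indMap T E)^[R' - 1] x) := by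
      have hts := tau_succ (T := T) (E := E) (x := x) (R' - 1)
      have he : R' - 1 + 1 = R' := by omega
      rw [he] at hts
      exact hts
    have hsm : min (retTime T E ((indMap T E)^[i] x))
        (retTime T E ((indMap T E)^[R' - 1] x)) ≤ secondMaxRet T E x R' :=
      secondmax_ge Hx (by omega) (by omega) (by omega)
    have hk1 : retTime T E ((indMap T E)^[i] x) ≤ retTime T E ((indMap T E)^[k] x) := by
      rw [hkφ]
      exact le_maxret (by omega)
    have hk2 : retTime T E ((indMap T E)^[R' - 1] x)
        ≤ retTime T E ((indMap T E)^[k] x) := by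
      rw [hkφ]
      exact le_maxret (by omega)
    omega

end Aux12b

/-- Lemma 4.2 (useful-1): for a.e. `x ∈ E`, eventually
`N < τ¹_{E,x}(R_{E,N,m}(x)) ≤ N + M²_{N,m}(x)`. -/
theorem statement12 {X : Type*} [MeasurableSpace X] (μ : Measure X) [SigmaFinite μ]
    (T : X → X) (hTcons : Conservative T μ) (hTerg : Ergodic T μ)
    (hXinf : μ Set.univ = ∞)
    (E : Set X) (hEmeas : MeasurableSet E) (hE1 : μ E = 1) :
    ∀ᵐ x ∂μ.restrict E, ∀ᶠ N : ℕ in atTop,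
      N < tauRetTrim T E x (visitsM T E N x) ∧
      tauRetTrim T E x (visitsM T E N x) ≤ N + secondMaxRet T E x (visitsM T E N x) := by
  have hae := hTcons.ae_mem_imp_frequently_image_mem hEmeas.nullMeasurableSet
  filter_upwards [ae_restrict_mem hEmeas, ae_restrict_of_ae hae] with x hxE hfreq
  have Hx : Rets T E x := by
    intro m
    obtain ⟨n, hn, hnE⟩ := frequently_atTop.mp (hfreq hxE) (m + 1)
    exact ⟨n, by omega, hnE⟩
  exact Filter.Eventually.of_forall fun N => key hxE Hx N
end Paper
end
end

section
/- Let (a_n) and (b_n) be two sequences of non-negative real numbers, at least one of them diverging to infinity, and let L be a non-negative slowly varying function such that n ↦ n L(n) is non-decreasing. Then a_n L(a_n) + b_n L(b_n) ~ (a_n + b_n) L(a_n + b_n) as n → ∞. -/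
open MeasureTheory Filter Set Topology Asymptotics

open scoped ENNReal NNReal

noncomputable section

namespace Paper

variable {X : Type*}

private lemma L_eventually_pos (L : ℝ → ℝ) (hL0 : ∀ x : ℝ, 0 < x → 0 ≤ L x)
    (hL : SlowlyVarying L) : ∀ᶠ x : ℝ in atTop, 0 < L x := by
  have h := Metric.tendsto_nhds.mp (hL 1 one_pos) 1 one_pos
  filter_upwards [h, eventually_gt_atTop (0:ℝ)] with x hx hx0
  rcases (hL0 x hx0).lt_or_eq with h' | h'
  · exact h'
  · exfalso
    rw [Real.dist_eq, one_mul, ← h', div_zero, zero_sub, abs_neg, abs_one] at hx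
    exact lt_irrefl 1 hx

private lemma key_lemma (L : ℝ → ℝ) (hL0 : ∀ x : ℝ, 0 < x → 0 ≤ L x)
    (hL : SlowlyVarying L)
    (hmono : MonotoneOn (fun x : ℝ => x * L x) (Set.Ici 0))
    (ε : ℝ) (hε : 0 < ε) :
    ∀ᶠ x : ℝ in atTop, ∀ r : ℝ, 0 ≤ r → r ≤ 1 →
      |r * L (r * x) - r * L x| ≤ ε * L x := by
  set n : ℕ := ⌈2 / ε⌉₊ with hn
  have hn0 : 0 < n := Nat.ceil_pos.mpr (by positivity)
  have hnR : (0:ℝ) < n := Nat.cast_pos.mpr hn0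
  have hinv : 1 / (n:ℝ) ≤ ε / 2 := by
    rw [div_le_div_iff₀ hnR two_pos]
    have h2 : 2 / ε ≤ (n:ℝ) := Nat.le_ceil _
    have h3 : 2 ≤ (n:ℝ) * ε := by
      rw [div_le_iff₀ hε] at h2; linarith
    nlinarith
  have hgrid : ∀ i ∈ Finset.Icc 1 n, ∀ᶠ x : ℝ in atTop,
      |L ((i / n : ℝ) * x) - L x| ≤ ε / 2 * L x := by
    intro i hi
    have hi1 : 1 ≤ i := (Finset.mem_Icc.mp hi).1
    have hipos : (0:ℝ) < (i:ℝ)/(n:ℝ) :=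
      div_pos (by exact_mod_cast Nat.lt_of_lt_of_le Nat.zero_lt_one hi1) hnR
    have h := Metric.tendsto_nhds.mp (hL ((i:ℝ)/(n:ℝ)) hipos) (ε/2) (by positivity)
    filter_upwards [h, L_eventually_pos L hL0 hL] with x hx hLx
    rw [Real.dist_eq] at hx
    have hLxne : L x ≠ 0 := hLx.ne'
    have key : L ((↑i/↑n : ℝ) * x) - L x = (L ((↑i/↑n : ℝ) * x)/L x - 1) * L x := by
      field_simp
    rw [key, abs_mul, abs_of_pos hLx]
    exact mul_le_mul_of_nonneg_right hx.le hLx.le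
  have hall : ∀ᶠ x : ℝ in atTop, ∀ i ∈ Finset.Icc 1 n,
      |L ((i / n : ℝ) * x) - L x| ≤ ε / 2 * L x :=
    (Filter.eventually_all_finset _).mpr hgrid
  filter_upwards [hall, L_eventually_pos L hL0 hL, eventually_gt_atTop (0:ℝ)]
    with x hgridx hLx hx0 r hr0 hr1
  -- set up the grid point
  set i : ℕ := min ⌊r * n⌋₊ (n - 1) with hidef
  have hin1 : i ≤ n - 1 := min_le_right _ _
  have hin : i + 1 ≤ n := by omega
  set q : ℝ := (i:ℝ) / n with hq
  set q' : ℝ := ((i:ℝ) + 1) / n with hq'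
  have hq0 : 0 ≤ q := by positivity
  have hq'1 : q' ≤ 1 := by
    rw [div_le_one hnR]
    have : ((i:ℝ) + 1) = ((i+1 : ℕ) : ℝ) := by push_cast; ring
    rw [this]
    exact_mod_cast hin
  have hq_le_r : q ≤ r := by
    rw [div_le_iff₀ hnR]
    have h1 : ((i:ℝ)) ≤ (⌊r * n⌋₊ : ℝ) := by exact_mod_cast min_le_left _ _
    have h2 : ((⌊r * n⌋₊ : ℕ) : ℝ) ≤ r * n := Nat.floor_le (by positivity)
    linarith
  have hr_le_q' : r ≤ q' := by
    rw [le_div_iff₀ hnR]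
    by_cases hc : ⌊r * n⌋₊ ≤ n - 1
    · have hie : i = ⌊r * n⌋₊ := min_eq_left hc
      have := Nat.lt_floor_add_one (r * (n:ℝ))
      rw [← hie] at this
      linarith
    · have hie : i = n - 1 := min_eq_right (by omega)
      have : ((i:ℝ)) + 1 = (n:ℝ) := by
        rw [hie]; push_cast [Nat.cast_sub hn0]; ring
      rw [this]
      nlinarith
  have hq_le_1 : q ≤ 1 := le_trans hq_le_r hr1
  have hq'_sub : q' - q = 1 / n := by rw [hq, hq']; field_simp; ring
  -- monotonicity facts
  have hfb : (r*x) * L (r*x) ≤ (q'*x) * L (q'*x) :=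
    hmono (Set.mem_Ici.mpr (by positivity)) (Set.mem_Ici.mpr (by positivity))
      (mul_le_mul_of_nonneg_right hr_le_q' hx0.le)
  have hcancel : ∀ u v : ℝ, (u*x) * L (u*x) ≤ (v*x) * L (v*x) →
      u * L (u*x) ≤ v * L (v*x) := by
    intro u v huv
    have h1 : x * (u * L (u*x)) ≤ x * (v * L (v*x)) := by
      calc x * (u * L (u*x)) = (u*x) * L (u*x) := by ring
      _ ≤ (v*x) * L (v*x) := huv
      _ = x * (v * L (v*x)) := by ring
    exact le_of_mul_le_mul_left h1 hx0
  have hub : r * L (r*x) ≤ q' * L (q'*x) := hcancel _ _ hfb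
  -- grid bound at i+1
  have hg' : |L (q' * x) - L x| ≤ ε / 2 * L x := by
    have h := hgridx (i+1) (Finset.mem_Icc.mpr ⟨by omega, hin⟩)
    have : (((i+1:ℕ) : ℝ) / n : ℝ) = q' := by push_cast; ring
    rwa [this] at h
  have hLq' : L (q' * x) ≤ L x + ε/2 * L x := by
    have := (abs_le.mp hg').2; linarith
  -- lower bound
  have hrL0 : 0 ≤ r * L (r*x) := by
    rcases eq_or_lt_of_le hr0 with h | h
    · rw [← h]; simp
    · exact mul_nonneg h.le (hL0 _ (by positivity))
  have hlb : q * (L x - ε/2 * L x) ≤ r * L (r*x) := by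
    by_cases hi0 : i = 0
    · have : q = 0 := by rw [hq, hi0]; simp
      rw [this]; simpa using hrL0
    · have hfa : (q*x) * L (q*x) ≤ (r*x) * L (r*x) :=
        hmono (Set.mem_Ici.mpr (by positivity)) (Set.mem_Ici.mpr (by positivity))
          (mul_le_mul_of_nonneg_right hq_le_r hx0.le)
      have hlow : q * L (q*x) ≤ r * L (r*x) := hcancel _ _ hfa
      have hg : |L (q * x) - L x| ≤ ε / 2 * L x :=
        hgridx i (Finset.mem_Icc.mpr ⟨by omega, by omega⟩)
      have hLq : L x - ε/2 * L x ≤ L (q * x) := by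
        have := (abs_le.mp hg).1; linarith
      calc q * (L x - ε/2 * L x) ≤ q * L (q*x) :=
        mul_le_mul_of_nonneg_left hLq hq0
      _ ≤ r * L (r*x) := hlow
  -- conclude
  rw [abs_le]
  constructor
  · -- -(ε * L x) ≤ r * L (r*x) - r * L x
    have h1 : r * L x - r * L (r*x) ≤ r * L x - q * (L x - ε/2 * L x) := by linarith
    have h2 : r * L x - q * (L x - ε/2 * L x) = (r - q) * L x + q * (ε/2 * L x) := by ring
    have h3 : (r - q) * L x ≤ (1/n) * L x :=
      mul_le_mul_of_nonneg_right (by linarith) hLx.le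
    have h4 : q * (ε/2 * L x) ≤ 1 * (ε/2 * L x) :=
      mul_le_mul_of_nonneg_right hq_le_1 (by positivity)
    have h5 : (1/(n:ℝ)) * L x ≤ (ε/2) * L x :=
      mul_le_mul_of_nonneg_right hinv hLx.le
    linarith
  · have h1 : r * L (r*x) - r * L x ≤ q' * (L x + ε/2 * L x) - r * L x := by
      have := mul_le_mul_of_nonneg_left hLq' (le_trans hq0 (by linarith : q ≤ q'))
      nlinarith
    have h2 : q' * (L x + ε/2 * L x) - r * L x = (q' - r) * L x + q' * (ε/2 * L x) := by ring
    have h3 : (q' - r) * L x ≤ (1/n) * L x :=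
      mul_le_mul_of_nonneg_right (by linarith) hLx.le
    have h4 : q' * (ε/2 * L x) ≤ 1 * (ε/2 * L x) :=
      mul_le_mul_of_nonneg_right hq'1 (by positivity)
    have h5 : (1/(n:ℝ)) * L x ≤ (ε/2) * L x :=
      mul_le_mul_of_nonneg_right hinv hLx.le
    linarith

/-- Lemma B.1 (lemma-somme): for non-negative sequences, at least one diverging, and a
non-negative slowly varying `L` with `x ↦ x L(x)` non-decreasing,
`aₙ L(aₙ) + bₙ L(bₙ) ∼ (aₙ + bₙ) L(aₙ + bₙ)`. -/
theorem statement16 (a b : ℕ → ℝ) (ha0 : ∀ n, 0 ≤ a n) (hb0 : ∀ n, 0 ≤ b n)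
    (hdiv : Tendsto a atTop atTop ∨ Tendsto b atTop atTop)
    (L : ℝ → ℝ) (hL0 : ∀ x : ℝ, 0 < x → 0 ≤ L x) (hL : SlowlyVarying L)
    (hmono : MonotoneOn (fun x : ℝ => x * L x) (Set.Ici 0)) :
    Tendsto (fun n : ℕ =>
        (a n * L (a n) + b n * L (b n)) / ((a n + b n) * L (a n + b n)))
      atTop (𝓝 1) := by
  have hs : Tendsto (fun n => a n + b n) atTop atTop := by
    rcases hdiv with h | h
    · exact tendsto_atTop_mono (fun n => le_add_of_nonneg_right (hb0 n)) h
    · exact tendsto_atTop_mono (fun n => le_add_of_nonneg_left (ha0 n)) h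
  rw [Metric.tendsto_nhds]
  intro ε hε
  set δ : ℝ := min (ε/3) 1 with hδdef
  have hδ0 : 0 < δ := lt_min (by linarith) one_pos
  have hδε : δ ≤ ε/3 := min_le_left _ _
  have hP : ∀ᶠ x : ℝ in atTop, (0 < x ∧ 0 < L x ∧
      ∀ r : ℝ, 0 ≤ r → r ≤ 1 → |r * L (r * x) - r * L x| ≤ δ * L x) := by
    filter_upwards [eventually_gt_atTop (0:ℝ), L_eventually_pos L hL0 hL,
      key_lemma L hL0 hL hmono δ hδ0] with x h1 h2 h3
    exact ⟨h1, h2, h3⟩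
  filter_upwards [hs.eventually hP] with n hn
  obtain ⟨hs0, hLs, hunif⟩ := hn
  have hsne : (a n + b n) ≠ 0 := hs0.ne'
  have hbound : ∀ c : ℝ, 0 ≤ c → c ≤ a n + b n →
      |c * L c - c * L (a n + b n)| ≤ δ * L (a n + b n) * (a n + b n) := by
    intro c hc0 hcs
    have hr0 : 0 ≤ c / (a n + b n) := by positivity
    have hr1 : c / (a n + b n) ≤ 1 := by rw [div_le_one hs0]; exact hcs
    have h1 := hunif (c / (a n + b n)) hr0 hr1
    have hrc : c / (a n + b n) * (a n + b n) = c := div_mul_cancel₀ _ hsne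
    rw [hrc] at h1
    have he : c * L c - c * L (a n + b n)
        = (c / (a n + b n) * L c - c / (a n + b n) * L (a n + b n)) * (a n + b n) := by
      field_simp
    rw [he, abs_mul, abs_of_pos hs0]
    exact mul_le_mul_of_nonneg_right h1 hs0.le
  have ha' := hbound (a n) (ha0 n) (le_add_of_nonneg_right (hb0 n))
  have hb' := hbound (b n) (hb0 n) (le_add_of_nonneg_left (ha0 n))
  have hden : 0 < (a n + b n) * L (a n + b n) := mul_pos hs0 hLs
  have hnum : |(a n * L (a n) + b n * L (b n)) - (a n + b n) * L (a n + b n)|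
      ≤ 2 * δ * ((a n + b n) * L (a n + b n)) := by
    have e : (a n * L (a n) + b n * L (b n)) - (a n + b n) * L (a n + b n)
        = (a n * L (a n) - a n * L (a n + b n))
          + (b n * L (b n) - b n * L (a n + b n)) := by ring
    rw [e]
    calc |(a n * L (a n) - a n * L (a n + b n))
          + (b n * L (b n) - b n * L (a n + b n))|
        ≤ |a n * L (a n) - a n * L (a n + b n)|
          + |b n * L (b n) - b n * L (a n + b n)| := abs_add_le _ _
      _ ≤ 2 * δ * ((a n + b n) * L (a n + b n)) := by nlinarith
  rw [Real.dist_eq]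
  have he2 : (a n * L (a n) + b n * L (b n)) / ((a n + b n) * L (a n + b n)) - 1
      = ((a n * L (a n) + b n * L (b n)) - (a n + b n) * L (a n + b n))
        / ((a n + b n) * L (a n + b n)) := by
    field_simp
  rw [he2, abs_div, abs_of_pos hden, div_lt_iff₀ hden]
  have h6 : 2 * δ * ((a n + b n) * L (a n + b n))
      ≤ 2 * (ε/3) * ((a n + b n) * L (a n + b n)) := by nlinarith
  nlinarith
end Paper
end
end
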